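/- Let (γ, T, N, B, κ, τ) be a framed curve in ℝ³ parametrized by arclength, defined on an interval I, whose torsion is a nonzero constant τ, and which lies on the unit sphere: there exists c ∈ ℝ³ with ‖γ(s) − c‖ = 1 for all s ∈ I. Then there exists s₀ ∈ ℝ such that κ(s)·cos(τ·(s − s₀)) = 1 for all s ∈ I; in particular, after translating the arclength parameter so that s₀ = 0, the curvature is κ(s) = sec(τ·s). -/

import Mathlib

open scoped RealInnerProductSpace

/-- The cross product of two vectors in Euclidean 3-space. -/
noncomputable def cross3 (u v : EuclideanSpace ℝ (Fin 3)) : EuclideanSpace ℝ (Fin 3) :=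
  WithLp.toLp 2 ![u 1 * v 2 - u 2 * v 1, u 2 * v 0 - u 0 * v 2, u 0 * v 1 - u 1 * v 0]

/-- A framed curve in ℝ³, parametrized by arclength, on the parameter set `I`:
the maps `T`, `N`, `B` form a positively oriented orthonormal frame at each `s ∈ I`,
`κ` and `τ` are continuous on `I`, and the Frenet equations
`γ' = T`, `T' = κ·N`, `N' = −κ·T + τ·B`, `B' = −τ·N` hold on `I`. -/
structure FramedCurveOn (γ T N B : ℝ → EuclideanSpace ℝ (Fin 3)) (κ τ : ℝ → ℝ)
    (I : Set ℝ) : Prop where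
  contκ : ContinuousOn κ I
  contτ : ContinuousOn τ I
  unitT : ∀ s ∈ I, ‖T s‖ = 1
  unitN : ∀ s ∈ I, ‖N s‖ = 1
  unitB : ∀ s ∈ I, ‖B s‖ = 1
  orthoTN : ∀ s ∈ I, ⟪T s, N s⟫ = (0 : ℝ)
  orthoTB : ∀ s ∈ I, ⟪T s, B s⟫ = (0 : ℝ)
  orthoNB : ∀ s ∈ I, ⟪N s, B s⟫ = (0 : ℝ)
  oriented : ∀ s ∈ I, B s = cross3 (T s) (N s)
  derivγ : ∀ s ∈ I, HasDerivWithinAt γ (T s) I s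
  derivT : ∀ s ∈ I, HasDerivWithinAt T (κ s • N s) I s
  derivN : ∀ s ∈ I, HasDerivWithinAt N ((-κ s) • T s + τ s • B s) I s
  derivB : ∀ s ∈ I, HasDerivWithinAt B ((-τ s) • N s) I s

/-- A closed framed curve in ℝ³ of period `L`: a framed curve defined on all of ℝ,
all of whose data is `L`-periodic. -/
structure ClosedFramedCurve (γ T N B : ℝ → EuclideanSpace ℝ (Fin 3)) (κ τ : ℝ → ℝ)
    (L : ℝ) : Prop where
  framed : FramedCurveOn γ T N B κ τ Set.univ
  periodicγ : Function.Periodic γ L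
  periodicT : Function.Periodic T L
  periodicN : Function.Periodic N L
  periodicB : Function.Periodic B L
  periodicκ : Function.Periodic κ L
  periodicτ : Function.Periodic τ L

set_option maxHeartbeats 1000000 in
/-- A framed curve of nonzero constant torsion `τ₀` on the unit sphere, defined on an
(open) interval, has curvature `κ(s) = sec(τ₀·(s − s₀))` for some `s₀`, i.e.
`κ(s)·cos(τ₀·(s − s₀)) = 1`. -/
theorem spherical_constant_torsion_curvature (γ T N B : ℝ → EuclideanSpace ℝ (Fin 3))
    (κ τ : ℝ → ℝ) (I : Set ℝ) (hIopen : IsOpen I) (hIint : I.OrdConnected)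
    (h : FramedCurveOn γ T N B κ τ I)
    (τ₀ : ℝ) (hτ₀ : τ₀ ≠ 0) (hτ : ∀ s ∈ I, τ s = τ₀)
    (c : EuclideanSpace ℝ (Fin 3)) (hsphere : ∀ s ∈ I, ‖γ s - c‖ = 1) :
    ∃ s₀ : ℝ, ∀ s ∈ I, κ s * Real.cos (τ₀ * (s - s₀)) = 1 := by
  classical
  rcases I.eq_empty_or_nonempty with hI | ⟨s₁, hs₁⟩
  · exact ⟨0, fun s hs => by simp [hI] at hs⟩
  have hconv : Convex ℝ I := convex_iff_ordConnected.mpr hIint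
  set x : ℝ → EuclideanSpace ℝ (Fin 3) := fun s => γ s - c with hxdef
  set f : ℝ → ℝ := fun s => ⟪x s, T s⟫ with hfdef
  set g : ℝ → ℝ := fun s => ⟪x s, N s⟫ with hgdef
  set b : ℝ → ℝ := fun s => ⟪x s, B s⟫ with hbdef
  have hdx : ∀ s ∈ I, HasDerivAt x (T s) s := fun s hs =>
    ((h.derivγ s hs).hasDerivAt (hIopen.mem_nhds hs)).sub_const c
  have hdT : ∀ s ∈ I, HasDerivAt T (κ s • N s) s := fun s hs =>
    (h.derivT s hs).hasDerivAt (hIopen.mem_nhds hs)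
  have hdN : ∀ s ∈ I, HasDerivAt N ((-κ s) • T s + τ s • B s) s := fun s hs =>
    (h.derivN s hs).hasDerivAt (hIopen.mem_nhds hs)
  have hdB : ∀ s ∈ I, HasDerivAt B ((-τ s) • N s) s := fun s hs =>
    (h.derivB s hs).hasDerivAt (hIopen.mem_nhds hs)
  -- f = 0 on I
  have hf0 : ∀ s ∈ I, f s = 0 := by
    intro s hs
    have h1 : HasDerivAt (fun t => ⟪x t, x t⟫ : ℝ → ℝ) (⟪x s, T s⟫ + ⟪T s, x s⟫) s :=
      (hdx s hs).inner ℝ (hdx s hs)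
    have h2 : HasDerivAt (fun t => ⟪x t, x t⟫ : ℝ → ℝ) 0 s := by
      have heq : (fun t => ⟪x t, x t⟫ : ℝ → ℝ) =ᶠ[nhds s] fun _ => (1 : ℝ) := by
        filter_upwards [hIopen.mem_nhds hs] with t ht
        rw [real_inner_self_eq_norm_sq, hsphere t ht]; norm_num
      exact (hasDerivAt_const s (1 : ℝ)).congr_of_eventuallyEq heq
    have huniq := h1.unique h2
    rw [real_inner_comm (x s) (T s)] at huniq
    have : f s + f s = 0 := huniq
    linarith
  -- κ·g = -1 on I
  have hκg : ∀ s ∈ I, κ s * g s = -1 := by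
    intro s hs
    have h1 : HasDerivAt f (⟪x s, κ s • N s⟫ + ⟪T s, T s⟫) s := (hdx s hs).inner ℝ (hdT s hs)
    have h2 : HasDerivAt f 0 s := by
      have heq : f =ᶠ[nhds s] fun _ => (0 : ℝ) := by
        filter_upwards [hIopen.mem_nhds hs] with t ht using hf0 t ht
      exact (hasDerivAt_const s (0 : ℝ)).congr_of_eventuallyEq heq
    have huniq := h1.unique h2
    rw [real_inner_smul_right, real_inner_self_eq_norm_sq, h.unitT s hs] at huniq
    nlinarith [huniq]
  -- derivative of g and b
  have hdg : ∀ s ∈ I, HasDerivAt g (τ₀ * b s) s := by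
    intro s hs
    have h1 := (hdx s hs).inner ℝ (hdN s hs)
    have hval : ⟪x s, (-κ s) • T s + τ s • B s⟫ + ⟪T s, N s⟫ = τ₀ * b s := by
      rw [inner_add_right, real_inner_smul_right, real_inner_smul_right, h.orthoTN s hs,
        hτ s hs]
      have : ⟪x s, T s⟫ = (0 : ℝ) := hf0 s hs
      rw [this]; ring
    rw [hval] at h1; exact h1
  have hdb : ∀ s ∈ I, HasDerivAt b (-(τ₀ * g s)) s := by
    intro s hs
    have h1 := (hdx s hs).inner ℝ (hdB s hs)
    have hval : ⟪x s, (-τ s) • N s⟫ + ⟪T s, B s⟫ = -(τ₀ * g s) := by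
      rw [real_inner_smul_right, h.orthoTB s hs, hτ s hs]; ring
    rw [hval] at h1; exact h1
  -- g(s₁)² + b(s₁)² = 1
  have hnorm1 : g s₁ ^ 2 + b s₁ ^ 2 = 1 := by
    set v : Fin 3 → EuclideanSpace ℝ (Fin 3) := ![T s₁, N s₁, B s₁] with hvdef
    have hon : Orthonormal ℝ v := by
      constructor
      · intro i
        fin_cases i
        · exact h.unitT s₁ hs₁
        · exact h.unitN s₁ hs₁
        · exact h.unitB s₁ hs₁
      · intro i j hij
        fin_cases i <;> fin_cases j <;>
          first
            | exact absurd rfl hij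
            | exact h.orthoTN s₁ hs₁
            | exact h.orthoTB s₁ hs₁
            | exact h.orthoNB s₁ hs₁
            | exact (real_inner_comm _ _).trans (h.orthoTN s₁ hs₁)
            | exact (real_inner_comm _ _).trans (h.orthoTB s₁ hs₁)
            | exact (real_inner_comm _ _).trans (h.orthoNB s₁ hs₁)
    have card : Fintype.card (Fin 3) = Module.finrank ℝ (EuclideanSpace ℝ (Fin 3)) := by simp
    set bas := basisOfOrthonormalOfCardEqFinrank hon card with hbasdef
    have hbas : ⇑bas = v := coe_basisOfOrthonormalOfCardEqFinrank hon card
    set ob := bas.toOrthonormalBasis (by rwa [hbas]) with hobdef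
    have hob : ⇑ob = v := by rw [hobdef, Module.Basis.coe_toOrthonormalBasis, hbas]
    have hsum := ob.sum_inner_mul_inner (x s₁) (x s₁)
    rw [real_inner_self_eq_norm_sq] at hsum
    have hxs : ‖x s₁‖ = 1 := hsphere s₁ hs₁
    rw [hxs] at hsum
    rw [Fin.sum_univ_three, hob] at hsum
    have hT : v 0 = T s₁ := rfl
    have hN : v 1 = N s₁ := rfl
    have hB : v 2 = B s₁ := rfl
    rw [hT, hN, hB, real_inner_comm (x s₁) (T s₁), real_inner_comm (x s₁) (N s₁),
      real_inner_comm (x s₁) (B s₁)] at hsum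
    have hf1 : f s₁ = 0 := hf0 s₁ hs₁
    have : f s₁ * f s₁ + g s₁ * g s₁ + b s₁ * b s₁ = 1 ^ 2 := hsum
    nlinarith [this, hf1]
  -- choose the angle θ with cos θ = -g s₁, sin θ = b s₁
  have hga : -g s₁ ∈ Set.Icc (-1 : ℝ) 1 := by
    constructor <;> nlinarith [hnorm1, sq_nonneg (g s₁), sq_nonneg (b s₁)]
  set θ : ℝ := if 0 ≤ b s₁ then Real.arccos (-g s₁) else -Real.arccos (-g s₁) with hθdef
  have hcosθ : Real.cos θ = -g s₁ := by
    rw [hθdef]; split_ifs <;>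
      simp [Real.cos_arccos hga.1 hga.2]
  have hsinθ : Real.sin θ = b s₁ := by
    have hsq : Real.sqrt (1 - (-g s₁) ^ 2) = |b s₁| := by
      rw [show (1 : ℝ) - (-g s₁) ^ 2 = b s₁ ^ 2 by nlinarith [hnorm1], Real.sqrt_sq_eq_abs]
    rw [hθdef]; split_ifs with hb
    · rw [Real.sin_arccos, hsq, abs_of_nonneg hb]
    · rw [Real.sin_neg, Real.sin_arccos, hsq, abs_of_neg (lt_of_not_ge hb)]; ring
  refine ⟨s₁ - θ / τ₀, fun s hs => ?_⟩
  -- define u, v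
  set u : ℝ → ℝ := fun s => g s + Real.cos (τ₀ * (s - (s₁ - θ / τ₀))) with hudef
  set w : ℝ → ℝ := fun s => b s - Real.sin (τ₀ * (s - (s₁ - θ / τ₀))) with hwdef
  have hθ1 : τ₀ * (s₁ - (s₁ - θ / τ₀)) = θ := by field_simp; ring
  have hu1 : u s₁ = 0 := by rw [hudef]; simp only; rw [hθ1, hcosθ]; ring
  have hw1 : w s₁ = 0 := by rw [hwdef]; simp only; rw [hθ1, hsinθ]; ring
  have hdarg : ∀ s : ℝ, HasDerivAt (fun t => τ₀ * (t - (s₁ - θ / τ₀))) τ₀ s := by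
    intro s
    simpa using (((hasDerivAt_id s).sub_const (s₁ - θ / τ₀)).const_mul τ₀)
  have hdu : ∀ s ∈ I, HasDerivAt u (τ₀ * w s) s := by
    intro s hs
    have := (hdg s hs).add ((hdarg s).cos)
    refine this.congr_deriv ?_
    rw [hwdef]; simp only; ring
  have hdw : ∀ s ∈ I, HasDerivAt w (-(τ₀ * u s)) s := by
    intro s hs
    have := (hdb s hs).sub ((hdarg s).sin)
    refine this.congr_deriv ?_
    rw [hudef]; simp only; ring
  -- E = u² + w² has zero derivative on I, hence is constant
  have hdE : ∀ s ∈ I, HasDerivAt (fun t => u t ^ 2 + w t ^ 2) 0 s := by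
    intro s hs
    have h1 := ((hdu s hs).pow 2).add ((hdw s hs).pow 2)
    refine h1.congr_deriv ?_
    ring
  have hEconst : ∀ s ∈ I, u s ^ 2 + w s ^ 2 = u s₁ ^ 2 + w s₁ ^ 2 := by
    intro s hs
    apply hconv.is_const_of_fderivWithin_eq_zero (𝕜 := ℝ)
      (f := fun t => u t ^ 2 + w t ^ 2) ?_ ?_ hs hs₁
    · intro z hz
      exact ((hdE z hz).differentiableAt).differentiableWithinAt
    · intro z hz
      rw [fderivWithin_of_isOpen hIopen hz]
      have := (hdE z hz).hasFDerivAt.fderiv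
      rw [this]
      ext
      simp
  have hE0 : u s ^ 2 + w s ^ 2 = 0 := by
    rw [hEconst s hs, hu1, hw1]; ring
  have hu0 : u s = 0 := by nlinarith [sq_nonneg (u s), sq_nonneg (w s)]
  have hcos : Real.cos (τ₀ * (s - (s₁ - θ / τ₀))) = -g s := by
    have : g s + Real.cos (τ₀ * (s - (s₁ - θ / τ₀))) = 0 := hu0
    linarith
  rw [hcos]
  have := hκg s hs
  nlinarith [this]
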